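/- The first and fourth Maxwell-GLM equations are consequences of the potential definitions: let A : ℝ × (Fin 3 → ℝ) → (Fin 3 → ℝ) and Z : ℝ × (Fin 3 → ℝ) → ℝ be twice continuously differentiable (ContDiff ℝ 2 on the product space). Define B(t,x) = curlₓ A(t,·)(x) + ∇ₓZ(t,x), E(t,x) = −∂ₜA(t,x), q(t,x) = divₓ A(t,·)(x) and p(t,x) = −∂ₜZ(t,x). Then for every (t,x): (i) for every component i ∈ Fin 3, t ↦ Bᵢ(t,x) is differentiable and ∂ₜBᵢ(t,x) + (curlₓ E(t,·)(x))ᵢ + ∂ᵢp(t,x) = 0, i.e. ∂ₜB + ∇×E + ∇p = 0; and (ii) t ↦ q(t,x) is differentiable and ∂ₜq(t,x) + divₓ E(t,·)(x) = 0, i.e. ∂ₜq + ∇·E = 0. -/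

import Mathlib

/-- Partial derivative of `f` at `x` in the `j`-th coordinate direction. -/
noncomputable def pderiv3 (f : (Fin 3 → ℝ) → ℝ) (j : Fin 3) (x : Fin 3 → ℝ) : ℝ :=
  fderiv ℝ f x (Pi.single j 1)

/-- The curl of a vector field `F : ℝ³ → ℝ³` at a point `x`. -/
noncomputable def curl3 (F : (Fin 3 → ℝ) → (Fin 3 → ℝ)) (x : Fin 3 → ℝ) : Fin 3 → ℝ :=
  ![pderiv3 (fun y => F y 2) 1 x - pderiv3 (fun y => F y 1) 2 x,
    pderiv3 (fun y => F y 0) 2 x - pderiv3 (fun y => F y 2) 0 x,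
    pderiv3 (fun y => F y 1) 0 x - pderiv3 (fun y => F y 0) 1 x]

/-- The divergence of a vector field `F : ℝ³ → ℝ³` at a point `x`. -/
noncomputable def div3 (F : (Fin 3 → ℝ) → (Fin 3 → ℝ)) (x : Fin 3 → ℝ) : ℝ :=
  ∑ j, pderiv3 (fun y => F y j) j x

/-- The gradient of a scalar field `f : ℝ³ → ℝ` at a point `x`. -/
noncomputable def grad3 (f : (Fin 3 → ℝ) → ℝ) (x : Fin 3 → ℝ) : Fin 3 → ℝ :=
  fun j => pderiv3 f j x


section Aux

lemma hasDerivAt_fst3 (f : ℝ × (Fin 3 → ℝ) → ℝ) (t : ℝ) (x : Fin 3 → ℝ)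
    (hf : DifferentiableAt ℝ f (t, x)) :
    HasDerivAt (fun s => f (s, x)) (fderiv ℝ f (t, x) (1, 0)) t := by
  have h := hf.hasFDerivAt.comp t ((hasFDerivAt_id (𝕜 := ℝ) t).prodMk (hasFDerivAt_const x t))
  exact h.hasDerivAt.congr_deriv (by simp)

lemma pderiv3_fix (f : ℝ × (Fin 3 → ℝ) → ℝ) (t : ℝ) (x : Fin 3 → ℝ) (j : Fin 3)
    (hf : DifferentiableAt ℝ f (t, x)) :
    pderiv3 (fun y => f (t, y)) j x = fderiv ℝ f (t, x) (0, Pi.single j 1) := by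
  have h : HasFDerivAt (fun y => f (t, y))
      ((fderiv ℝ f (t, x)).comp
        (((0 : (Fin 3 → ℝ) →L[ℝ] ℝ)).prod (ContinuousLinearMap.id ℝ _))) x :=
    hf.hasFDerivAt.comp x ((hasFDerivAt_const t x).prodMk (hasFDerivAt_id x))
  rw [pderiv3, h.fderiv]
  simp

lemma pderiv3_neg (g : (Fin 3 → ℝ) → ℝ) (j : Fin 3) (x : Fin 3 → ℝ) :
    pderiv3 (fun y => -g y) j x = -pderiv3 g j x := by
  simp [pderiv3, fderiv_neg]

lemma swap3 (f : ℝ × (Fin 3 → ℝ) → ℝ) (hf : ContDiff ℝ 2 f) (t : ℝ) (x : Fin 3 → ℝ)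
    (j : Fin 3) :
    HasDerivAt (fun s => pderiv3 (fun y => f (s, y)) j x)
      (pderiv3 (fun y => deriv (fun s => f (s, y)) t) j x) t := by
  have hdiff : ∀ p, DifferentiableAt ℝ f p := fun p => (hf.differentiable (by norm_num)) p
  have hD : ContDiff ℝ 1 (fderiv ℝ f) := hf.fderiv_right (by norm_num)
  set v : ℝ × (Fin 3 → ℝ) := (0, Pi.single j 1) with hv
  set u : ℝ × (Fin 3 → ℝ) := (1, 0) with hu
  have hgv : ContDiff ℝ 1 (fun p => fderiv ℝ f p v) := hD.clm_apply contDiff_const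
  have hgu : ContDiff ℝ 1 (fun p => fderiv ℝ f p u) := hD.clm_apply contDiff_const
  have hfd : ∀ w : ℝ × (Fin 3 → ℝ),
      fderiv ℝ (fun p => fderiv ℝ f p w) (t, x) = (fderiv ℝ (fderiv ℝ f) (t, x)).flip w := by
    intro w
    rw [show (fun p => fderiv ℝ f p w) = fun p => (fderiv ℝ f p) ((fun _ => w) p) from rfl,
      fderiv_clm_apply (hD.differentiable one_ne_zero _) (differentiableAt_const w)]
    simp
  have hsym : fderiv ℝ (fderiv ℝ f) (t, x) u v = fderiv ℝ (fderiv ℝ f) (t, x) v u :=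
    (hf.contDiffAt.isSymmSndFDerivAt (by simp)) u v
  have h1 : HasDerivAt (fun s => pderiv3 (fun y => f (s, y)) j x)
      (fderiv ℝ (fderiv ℝ f) (t, x) u v) t := by
    have heq : (fun s => pderiv3 (fun y => f (s, y)) j x)
        = fun s => fderiv ℝ f (s, x) v := by
      funext s; exact pderiv3_fix f s x j (hdiff _)
    rw [heq]
    have := hasDerivAt_fst3 (fun p => fderiv ℝ f p v) t x
      ((hgv.differentiable one_ne_zero) _)
    rwa [hfd v, ContinuousLinearMap.flip_apply] at this
  have h2 : pderiv3 (fun y => deriv (fun s => f (s, y)) t) j x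
      = fderiv ℝ (fderiv ℝ f) (t, x) v u := by
    have heq : (fun y => deriv (fun s => f (s, y)) t)
        = fun y => fderiv ℝ f (t, y) u := by
      funext y; exact (hasDerivAt_fst3 f t y (hdiff _)).deriv
    rw [heq, pderiv3_fix (fun p => fderiv ℝ f p u) t x j ((hgu.differentiable one_ne_zero) _),
      hfd u, ContinuousLinearMap.flip_apply]
  rw [h2, ← hsym]
  exact h1

end Aux

/-- The first and fourth Maxwell-GLM equations, `∂ₜB + ∇×E + ∇p = 0` and
`∂ₜq + ∇·E = 0`, are consequences of the definitions `B = ∇×A + ∇Z`,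
`E = -∂ₜA`, `q = ∇·A`, `p = -∂ₜZ` from C² potentials `A` and `Z`. -/
theorem maxwell_glm_from_potentials
    (A : ℝ × (Fin 3 → ℝ) → (Fin 3 → ℝ)) (Z : ℝ × (Fin 3 → ℝ) → ℝ)
    (hA : ContDiff ℝ 2 A) (hZ : ContDiff ℝ 2 Z)
    (B E : ℝ → (Fin 3 → ℝ) → Fin 3 → ℝ)
    (q p : ℝ → (Fin 3 → ℝ) → ℝ)
    (hB : ∀ (t : ℝ) (x : Fin 3 → ℝ),
      B t x = curl3 (fun y => A (t, y)) x + grad3 (fun y => Z (t, y)) x)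
    (hE : ∀ (t : ℝ) (x : Fin 3 → ℝ) (i : Fin 3),
      E t x i = -deriv (fun s => A (s, x) i) t)
    (hq : ∀ (t : ℝ) (x : Fin 3 → ℝ), q t x = div3 (fun y => A (t, y)) x)
    (hp : ∀ (t : ℝ) (x : Fin 3 → ℝ), p t x = -deriv (fun s => Z (s, x)) t) :
    ∀ (t : ℝ) (x : Fin 3 → ℝ),
      (∀ i : Fin 3,
        DifferentiableAt ℝ (fun s => B s x i) t ∧
        deriv (fun s => B s x i) t + curl3 (fun y => E t y) x i
          + pderiv3 (fun y => p t y) i x = 0) ∧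
      (DifferentiableAt ℝ (fun s => q s x) t ∧
        deriv (fun s => q s x) t + div3 (fun y => E t y) x = 0) := by
  intro t x
  have hAi : ∀ i : Fin 3, ContDiff ℝ 2 (fun p : ℝ × (Fin 3 → ℝ) => A p i) :=
    fun i => contDiff_pi.mp hA i
  have hEfun : ∀ c : Fin 3,
      (fun y => E t y c) = fun y => -deriv (fun s => A (s, y) c) t :=
    fun c => funext fun y => hE t y c
  constructor
  · intro i
    have hpfun : (fun y => p t y) = fun y => -deriv (fun s => Z (s, y)) t :=
      funext fun y => hp t y
    fin_cases i
    · have hBfun : (fun s => B s x 0) = fun s =>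
          (pderiv3 (fun y => A (s, y) 2) 1 x - pderiv3 (fun y => A (s, y) 1) 2 x)
            + pderiv3 (fun y => Z (s, y)) 0 x := by
        funext s; rw [hB]; simp [curl3, grad3]
      have hd := ((swap3 (fun p => A p 2) (hAi 2) t x 1).fun_sub
        (swap3 (fun p => A p 1) (hAi 1) t x 2)).fun_add (swap3 Z hZ t x 0)
      constructor
      · show DifferentiableAt ℝ (fun s => B s x 0) t
        rw [hBfun]; exact hd.differentiableAt
      · show deriv (fun s => B s x 0) t + curl3 (fun y => E t y) x 0
            + pderiv3 (fun y => p t y) 0 x = 0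
        rw [hBfun, hd.deriv]
        simp only [curl3, hEfun, hpfun, pderiv3_neg, Matrix.cons_val_zero]
        ring
    · have hBfun : (fun s => B s x 1) = fun s =>
          (pderiv3 (fun y => A (s, y) 0) 2 x - pderiv3 (fun y => A (s, y) 2) 0 x)
            + pderiv3 (fun y => Z (s, y)) 1 x := by
        funext s; rw [hB]; simp [curl3, grad3]
      have hd := ((swap3 (fun p => A p 0) (hAi 0) t x 2).fun_sub
        (swap3 (fun p => A p 2) (hAi 2) t x 0)).fun_add (swap3 Z hZ t x 1)
      constructor
      · show DifferentiableAt ℝ (fun s => B s x 1) t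
        rw [hBfun]; exact hd.differentiableAt
      · show deriv (fun s => B s x 1) t + curl3 (fun y => E t y) x 1
            + pderiv3 (fun y => p t y) 1 x = 0
        rw [hBfun, hd.deriv]
        simp only [curl3, hEfun, hpfun, pderiv3_neg, Matrix.cons_val_one, Matrix.head_cons, Matrix.cons_val_zero]
        ring
    · have hBfun : (fun s => B s x 2) = fun s =>
          (pderiv3 (fun y => A (s, y) 1) 0 x - pderiv3 (fun y => A (s, y) 0) 1 x)
            + pderiv3 (fun y => Z (s, y)) 2 x := by
        funext s; rw [hB]; simp [curl3, grad3]
      have hd := ((swap3 (fun p => A p 1) (hAi 1) t x 0).fun_sub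
        (swap3 (fun p => A p 0) (hAi 0) t x 1)).fun_add (swap3 Z hZ t x 2)
      constructor
      · show DifferentiableAt ℝ (fun s => B s x 2) t
        rw [hBfun]; exact hd.differentiableAt
      · show deriv (fun s => B s x 2) t + curl3 (fun y => E t y) x 2
            + pderiv3 (fun y => p t y) 2 x = 0
        rw [hBfun, hd.deriv]
        simp only [curl3, hEfun, hpfun, pderiv3_neg]
        norm_num [Matrix.cons_val_fin_one, Matrix.cons_val_two, Matrix.tail_cons, Matrix.head_cons]
        ring
  · have hqfun : (fun s => q s x) = fun s =>
        ∑ j : Fin 3, pderiv3 (fun y => A (s, y) j) j x := by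
      funext s; rw [hq]; rfl
    have hdq : HasDerivAt (fun s => ∑ j : Fin 3, pderiv3 (fun y => A (s, y) j) j x)
        (∑ j : Fin 3, pderiv3 (fun y => deriv (fun s => A (s, y) j) t) j x) t :=
      HasDerivAt.fun_sum fun j _ => swap3 (fun p => A p j) (hAi j) t x j
    constructor
    · rw [hqfun]; exact hdq.differentiableAt
    · rw [hqfun, hdq.deriv]
      simp only [div3, hEfun, pderiv3_neg, Finset.sum_neg_distrib]
      ring
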